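/- For |z| < 1, the generating functions of B_n^α satisfy ∑_{n=0}^∞ B_n^α(t) z^n = (1−z)^{1−2α} ∑_{n=0}^∞ B_n^{1−α}(t) z^n. -/

import Mathlib

open scoped BigOperators

/-- The Pochhammer symbol (rising factorial) (a)_n. -/
noncomputable def poch (a : ℂ) (n : ℕ) : ℂ := (ascPochhammer ℂ n).eval a

/-- ω = e^{2πi/3}. -/
noncomputable def ω : ℂ := Complex.exp (2 * Real.pi * Complex.I / 3)

/-- The polynomials B_n^α(t). -/
noncomputable def Ba (α t : ℂ) (n : ℕ) : ℂ :=
  (1 / (Nat.factorial n : ℂ)) * ∑ k ∈ Finset.range (n + 1),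
    poch (ω * t) k * poch (ω ^ 2 * t) k * poch (α + t) (n - k) * poch (α - t + k) (n - k)
      / ((Nat.factorial k : ℂ) * (Nat.factorial (n - k) : ℂ))


lemma poch_zero (a : ℂ) : poch a 0 = 1 := by simp [poch]

lemma poch_succ (a : ℂ) (n : ℕ) : poch a (n + 1) = poch a n * (a + n) := by
  simp [poch, ascPochhammer_succ_right, Polynomial.eval_mul]

lemma poch_succ_left (a : ℂ) (n : ℕ) : poch a (n + 1) = a * poch (a + 1) n := by
  simp [poch, ascPochhammer_succ_left, Polynomial.eval_mul, Polynomial.eval_comp]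


lemma vandermonde_id : ∀ (n : ℕ) (w c : ℂ),
    ∑ j ∈ Finset.range (n + 1),
      (-1 : ℂ) ^ j * (n.choose j) * poch w j * poch (c + j) (n - j) = poch (c - w) n := by
  intro n
  induction n with
  | zero => intro w c; simp [poch_zero]
  | succ n ih =>
      intro w c
      rw [Finset.sum_range_succ']
      have e1 : ∀ i ∈ Finset.range (n + 1),
          (-1 : ℂ) ^ (i+1) * (((n+1)).choose (i+1) : ℂ) * poch w (i+1)
              * poch (c + ((i+1 : ℕ) : ℂ)) (n + 1 - (i+1))
          = (-(w * ((-1 : ℂ) ^ i * ((n).choose i) * poch (w+1) i * poch ((c+1) + i) (n - i))))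
            + (-1 : ℂ) ^ (i+1) * ((n).choose (i+1) : ℂ) * poch w (i+1)
              * poch ((c+1) + (i : ℂ)) (n - i) := by
        intro i _
        have h2 : c + ((i+1 : ℕ) : ℂ) = (c+1) + (i : ℂ) := by push_cast; ring
        have h3 : (n + 1) - (i + 1) = n - i := by omega
        rw [h2, h3, poch_succ_left w i]
        push_cast [Nat.choose_succ_succ]
        ring
      rw [Finset.sum_congr rfl e1, Finset.sum_add_distrib]
      have hA : ∑ i ∈ Finset.range (n + 1),
          (-(w * ((-1 : ℂ) ^ i * ((n).choose i) * poch (w+1) i * poch ((c+1) + i) (n - i))))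
          = -w * poch (c - w) n := by
        rw [Finset.sum_neg_distrib, ← Finset.mul_sum, ih (w+1) (c+1)]
        have : c + 1 - (w + 1) = c - w := by ring
        rw [this]; ring
      rw [hA]
      -- second part
      have hB : (∑ i ∈ Finset.range (n + 1),
            (-1 : ℂ) ^ (i+1) * ((n).choose (i+1) : ℂ) * poch w (i+1)
              * poch ((c+1) + (i : ℂ)) (n - i))
          + (-1 : ℂ) ^ 0 * (((n+1)).choose 0 : ℂ) * poch w 0 * poch (c + ((0:ℕ) : ℂ)) (n + 1 - 0)
          = (c + n) * poch (c - w) n := by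
        rw [Finset.sum_range_succ]
        have hlast : (-1 : ℂ) ^ (n+1) * ((n).choose (n+1) : ℂ) * poch w (n+1)
            * poch ((c+1) + (n : ℂ)) (n - n) = 0 := by
          simp [Nat.choose_succ_self]
        rw [hlast, add_zero]
        rw [← ih w c, Finset.sum_range_succ', mul_add, Finset.mul_sum]
        congr 1
        · apply Finset.sum_congr rfl
          intro i hi
          have hi' : i < n := Finset.mem_range.mp hi
          have h4 : n - i = (n - (i+1)) + 1 := by omega
          have h5 : poch ((c+1) + (i : ℂ)) (n - i)
              = poch (c + ((i+1 : ℕ) : ℂ)) (n - (i+1)) * (c + n) := by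
            have hb : (c + 1 + (i:ℂ)) = c + ((i+1 : ℕ) : ℂ) := by push_cast; ring
            rw [hb, h4, poch_succ]
            congr 1
            rw [Nat.cast_sub (by omega)]
            push_cast; ring
          rw [h5]
          ring
        · have h6 : poch (c + ((0:ℕ) : ℂ)) (n + 1 - 0) = poch (c + ((0:ℕ):ℂ)) n * (c + n) := by
            have : n + 1 - 0 = n + 1 := rfl
            rw [this, poch_succ]
            push_cast; ring_nf
          rw [h6]
          simp only [Nat.choose_zero_right, Nat.sub_zero, Nat.cast_one, Nat.cast_zero]
          ring
      rw [add_assoc, hB, poch_succ]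
      ring



lemma triangle_swap {M : Type*} [AddCommMonoid M] (m : ℕ) (F : ℕ → ℕ → M) :
    ∑ i ∈ Finset.range (m+1), ∑ u ∈ Finset.range (m+1-i), F i u
      = ∑ j ∈ Finset.range (m+1), ∑ i ∈ Finset.range (j+1), F i (j-i) := by
  rw [Finset.sum_sigma', Finset.sum_sigma']
  refine Finset.sum_nbij' (i := fun x ↦ (⟨x.1 + x.2, x.1⟩ : Σ _ : ℕ, ℕ))
    (j := fun y ↦ (⟨y.2, y.1 - y.2⟩ : Σ _ : ℕ, ℕ)) ?_ ?_ ?_ ?_ ?_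
  · rintro ⟨a, b⟩ h
    simp only [Finset.mem_sigma, Finset.mem_range] at h ⊢
    omega
  · rintro ⟨a, b⟩ h
    simp only [Finset.mem_sigma, Finset.mem_range] at h ⊢
    omega
  · rintro ⟨a, b⟩ h
    simp only [Finset.mem_sigma, Finset.mem_range] at h
    have : a + b - a = b := by omega
    simp [this]
  · rintro ⟨a, b⟩ h
    simp only [Finset.mem_sigma, Finset.mem_range] at h
    have : b + (a - b) = a := by omega
    simp [this]
  · rintro ⟨a, b⟩ h
    simp only [Finset.mem_sigma, Finset.mem_range] at h
    simp only
    congr 1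
    omega


lemma poch_add (a : ℂ) (i u : ℕ) : poch a (i + u) = poch a i * poch (a + i) u := by
  induction u with
  | zero => simp [poch_zero]
  | succ u ih =>
      rw [show i + (u+1) = (i+u)+1 by ring, poch_succ, ih, poch_succ]
      push_cast; ring


lemma fact_ne (n : ℕ) : ((n.factorial : ℂ)) ≠ 0 := by
  exact_mod_cast Nat.cast_ne_zero.mpr (Nat.factorial_ne_zero n)


lemma saal (m : ℕ) (a b c : ℂ) (hc : ∀ j : ℕ, poch c j ≠ 0) :
    ∑ i ∈ Finset.range (m+1), poch (a+b-c) i / (i.factorial : ℂ) *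
        (poch (c-a) (m-i) * poch (c-b) (m-i) / (poch c (m-i) * ((m-i).factorial : ℂ)))
      = poch a m * poch b m / (poch c m * (m.factorial : ℂ)) := by
  -- Step E1 : reflect
  rw [← Finset.sum_range_reflect]
  simp only [Nat.add_sub_cancel]
  have E1 : ∀ i ∈ Finset.range (m+1),
      poch (a+b-c) (m-i) / (((m-i).factorial : ℂ)) *
        (poch (c-a) (m-(m-i)) * poch (c-b) (m-(m-i)) /
          (poch c (m-(m-i)) * (((m-(m-i)).factorial : ℂ))))
      = ∑ u ∈ Finset.range (m+1-i),
          poch (c-a) i * poch (c-b) i / (poch c i * (i.factorial : ℂ)) *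
            ((-1 : ℂ) ^ u * ((m-i).choose u) * poch (c - a + i) u * poch (b + i + u) (m-i-u))
            / ((m-i).factorial : ℂ) := by
    intro i hi
    have him : i ≤ m := by simpa using Nat.lt_succ_iff.mp (Finset.mem_range.mp hi)
    have h1 : m - (m - i) = i := by omega
    rw [h1]
    have hV := vandermonde_id (m-i) (c - a + i) (b + i)
    have hbase : (b + (i:ℂ)) - (c - a + (i:ℂ)) = a + b - c := by ring
    rw [hbase] at hV
    rw [← hV]
    rw [Finset.sum_div, Finset.sum_mul]
    apply Finset.sum_congr
    · congr 1; omega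
    · intro u hu
      field_simp
  rw [Finset.sum_congr rfl E1]
  have hswap := triangle_swap m (fun i u =>
      poch (c-a) i * poch (c-b) i / (poch c i * (i.factorial : ℂ)) *
        ((-1 : ℂ) ^ u * ((m-i).choose u) * poch (c - a + i) u * poch (b + i + u) (m-i-u))
        / ((m-i).factorial : ℂ))
  rw [hswap]
  -- Step E3 : inner sum via Vandermonde
  have E3 : ∀ j ∈ Finset.range (m+1),
      (∑ i ∈ Finset.range (j+1),
        poch (c-a) i * poch (c-b) i / (poch c i * (i.factorial : ℂ)) *
          ((-1 : ℂ) ^ (j-i) * ((m-i).choose (j-i)) * poch (c - a + i) (j-i)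
            * poch (b + i + ((j-i : ℕ) : ℂ)) (m-i-(j-i))) / ((m-i).factorial : ℂ))
      = (-1 : ℂ) ^ j * poch (c-a) j * poch b j * poch (b + j) (m-j)
          / (poch c j * (j.factorial : ℂ) * ((m-j).factorial : ℂ)) := by
    intro j hj
    have hjm : j ≤ m := by simpa using Nat.lt_succ_iff.mp (Finset.mem_range.mp hj)
    have hV := vandermonde_id j (c - b) c
    have hbase : c - (c - b) = b := by ring
    rw [hbase] at hV
    have key : ∀ i ∈ Finset.range (j+1),
        poch (c-a) i * poch (c-b) i / (poch c i * (i.factorial : ℂ)) *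
          ((-1 : ℂ) ^ (j-i) * ((m-i).choose (j-i)) * poch (c - a + i) (j-i)
            * poch (b + i + ((j-i : ℕ) : ℂ)) (m-i-(j-i))) / ((m-i).factorial : ℂ)
        = ((-1 : ℂ) ^ j * poch (c-a) j * poch (b + j) (m-j)
            / (poch c j * (j.factorial : ℂ) * ((m-j).factorial : ℂ)))
          * ((-1 : ℂ) ^ i * (j.choose i) * poch (c-b) i * poch (c + i) (j-i)) := by
      intro i hi
      have hij : i ≤ j := by simpa using Nat.lt_succ_iff.mp (Finset.mem_range.mp hi)
      -- facts
      have hfact1 : (((m-i).choose (j-i) : ℕ) : ℂ) * (((j-i).factorial : ℂ)) * (((m-j).factorial : ℂ))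
          = ((m-i).factorial : ℂ) := by
        have := Nat.choose_mul_factorial_mul_factorial (show j - i ≤ m - i by omega)
        have h2 : m - i - (j - i) = m - j := by omega
        rw [h2] at this
        exact_mod_cast congrArg (Nat.cast : ℕ → ℂ) this
      have hfact2 : ((j.choose i : ℕ) : ℂ) * ((i.factorial : ℂ)) * (((j-i).factorial : ℂ))
          = (j.factorial : ℂ) := by
        have := Nat.choose_mul_factorial_mul_factorial hij
        exact_mod_cast congrArg (Nat.cast : ℕ → ℂ) this
      have hxa : poch (c-a) j = poch (c-a) i * poch (c - a + i) (j-i) := by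
        have := poch_add (c-a) i (j-i)
        rw [show i + (j-i) = j by omega] at this
        exact this
      have hcj : poch c j = poch c i * poch (c + i) (j-i) := by
        have := poch_add c i (j-i)
        rw [show i + (j-i) = j by omega] at this
        exact this
      have hsign : ((-1 : ℂ)) ^ (j-i) * ((-1 : ℂ)) ^ i = ((-1 : ℂ)) ^ j := by
        rw [← pow_add]
        congr 1
        omega
      have hb2 : b + (i:ℂ) + ((j-i : ℕ):ℂ) = b + (j:ℂ) := by
        rw [Nat.cast_sub hij]; ring
      have hm2 : m - i - (j - i) = m - j := by omega
      have hsign2 : ((-1:ℂ))^(j-i) = (-1)^j * (-1)^i := by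
        have h1 : ((-1:ℂ))^i * (-1)^i = 1 := by
          rw [← pow_add]; exact Even.neg_one_pow ⟨i, rfl⟩
        calc ((-1:ℂ))^(j-i) = (-1)^(j-i) * ((-1)^i * (-1)^i) := by rw [h1, mul_one]
        _ = ((-1)^(j-i) * (-1)^i) * (-1)^i := by ring
        _ = (-1)^j * (-1)^i := by rw [hsign]
      rw [hb2, hm2, hxa, hcj, hsign2]
      have hci : poch c i ≠ 0 := hc i
      have hcij : poch (c + i) (j-i) ≠ 0 := by
        intro h0
        exact hc j (by rw [hcj, h0, mul_zero])
      have hch1 : (((m-i).choose (j-i) : ℕ) : ℂ) ≠ 0 := by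
        have : 0 < (m-i).choose (j-i) := Nat.choose_pos (by omega)
        exact_mod_cast Nat.cast_ne_zero.mpr (Nat.pos_iff_ne_zero.mp this)
      have hch2 : ((j.choose i : ℕ) : ℂ) ≠ 0 := by
        have : 0 < j.choose i := Nat.choose_pos hij
        exact_mod_cast Nat.cast_ne_zero.mpr (Nat.pos_iff_ne_zero.mp this)
      rw [div_mul_eq_mul_div, div_mul_eq_mul_div, div_div]
      rw [div_eq_div_iff (mul_ne_zero (mul_ne_zero hci (fact_ne i)) (fact_ne (m-i)))
        (mul_ne_zero (mul_ne_zero (mul_ne_zero hci hcij) (fact_ne j)) (fact_ne (m-j)))]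
      rw [← hfact1, ← hfact2]
      ring
    rw [Finset.sum_congr rfl key, ← Finset.mul_sum, hV]
    ring
  rw [Finset.sum_congr rfl E3]
  -- Step E4 : final Vandermonde
  have hV := vandermonde_id m (c - a) c
  have hbase : c - (c - a) = a := by ring
  rw [hbase] at hV
  rw [← hV, Finset.sum_mul, Finset.sum_div]
  apply Finset.sum_congr rfl
  intro j hj
  have hjm : j ≤ m := by simpa using Nat.lt_succ_iff.mp (Finset.mem_range.mp hj)
  have hbm : poch b m = poch b j * poch (b + j) (m-j) := by
    have := poch_add b j (m-j)
    rw [show j + (m-j) = m by omega] at this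
    exact this
  have hcm : poch c m = poch c j * poch (c + j) (m-j) := by
    have := poch_add c j (m-j)
    rw [show j + (m-j) = m by omega] at this
    exact this
  have hfact : ((m.choose j : ℕ) : ℂ) * ((j.factorial : ℂ)) * (((m-j).factorial : ℂ))
      = (m.factorial : ℂ) := by
    have := Nat.choose_mul_factorial_mul_factorial hjm
    exact_mod_cast congrArg (Nat.cast : ℕ → ℂ) this
  rw [hbm, hcm]
  have hcj : poch c j ≠ 0 := hc j
  have hcjm : poch (c + j) (m-j) ≠ 0 := by
    intro h0
    exact hc m (by rw [hcm, h0, mul_zero])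
  have hch : ((m.choose j : ℕ) : ℂ) ≠ 0 := by
    have : 0 < m.choose j := Nat.choose_pos hjm
    exact_mod_cast Nat.cast_ne_zero.mpr (Nat.pos_iff_ne_zero.mp this)
  rw [div_eq_div_iff
    (mul_ne_zero (mul_ne_zero hcj (fact_ne j)) (fact_ne (m-j)))
    (mul_ne_zero (mul_ne_zero hcj hcjm) (fact_ne m))]
  rw [← hfact]
  ring


lemma poch_natfac (k m : ℕ) :
    (k.factorial : ℂ) * poch ((k : ℂ) + 1) m = (((k + m).factorial : ℕ) : ℂ) := by
  induction m with
  | zero => simp [poch_zero]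
  | succ m ih =>
      rw [poch_succ, ← mul_assoc, ih, show k + (m+1) = (k+m)+1 by ring, Nat.factorial_succ]
      push_cast
      ring


lemma poch_nat_ne (k : ℕ) : ∀ j : ℕ, poch ((k : ℂ) + 1) j ≠ 0 := by
  intro j h
  have := poch_natfac k j
  rw [h, mul_zero] at this
  exact fact_ne (k+j) this.symm


lemma triangle_comm {M : Type*} [AddCommMonoid M] (m : ℕ) (F : ℕ → ℕ → M) :
    ∑ i ∈ Finset.range (m+1), ∑ u ∈ Finset.range (m+1-i), F i u
      = ∑ u ∈ Finset.range (m+1), ∑ i ∈ Finset.range (m+1-u), F i u := by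
  rw [Finset.sum_sigma', Finset.sum_sigma']
  refine Finset.sum_nbij' (i := fun x ↦ (⟨x.2, x.1⟩ : Σ _ : ℕ, ℕ))
    (j := fun y ↦ (⟨y.2, y.1⟩ : Σ _ : ℕ, ℕ)) ?_ ?_ ?_ ?_ ?_
  · rintro ⟨a, b⟩ h
    simp only [Finset.mem_sigma, Finset.mem_range] at h ⊢
    omega
  · rintro ⟨a, b⟩ h
    simp only [Finset.mem_sigma, Finset.mem_range] at h ⊢
    omega
  · rintro ⟨a, b⟩ _; rfl
  · rintro ⟨a, b⟩ _; rfl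
  · rintro ⟨a, b⟩ _; rfl


lemma Ba_expand (β t : ℂ) (N : ℕ) :
    Ba β t N = ∑ k ∈ Finset.range (N+1),
      (poch (ω*t) k * poch (ω^2*t) k / ((k.factorial : ℂ) * (k.factorial : ℂ))) *
        (poch (β+t) (N-k) * poch (β-t+(k:ℂ)) (N-k)
          / (poch ((k:ℂ)+1) (N-k) * (((N-k).factorial : ℕ) : ℂ))) := by
  rw [Ba, Finset.mul_sum]
  apply Finset.sum_congr rfl
  intro k hk
  have hkN : k ≤ N := by
    have := Finset.mem_range.mp hk; omega
  have hN : ((N.factorial : ℕ) : ℂ) = (k.factorial : ℂ) * poch ((k:ℂ)+1) (N-k) := by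
    rw [poch_natfac]
    congr 2
    omega
  rw [one_div_mul_eq_div, div_div, div_mul_div_comm,
    div_eq_div_iff (by exact mul_ne_zero (mul_ne_zero (fact_ne k) (fact_ne (N-k))) (fact_ne N))
      (mul_ne_zero (mul_ne_zero (fact_ne k) (fact_ne k))
        (mul_ne_zero (poch_nat_ne k (N-k)) (fact_ne (N-k)))), hN]
  ring


lemma Ba_conv (α t : ℂ) (n : ℕ) :
    Ba α t n = ∑ i ∈ Finset.range (n+1),
      poch (2*α - 1) i / (i.factorial : ℂ) * Ba (1-α) t (n-i) := by
  rw [Ba_expand α t n]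
  have step2 : ∀ k ∈ Finset.range (n+1),
      (poch (ω*t) k * poch (ω^2*t) k / ((k.factorial : ℂ) * (k.factorial : ℂ))) *
        (poch (α+t) (n-k) * poch (α-t+(k:ℂ)) (n-k)
          / (poch ((k:ℂ)+1) (n-k) * (((n-k).factorial : ℕ) : ℂ)))
      = ∑ u ∈ Finset.range (n+1-k),
          (poch (ω*t) k * poch (ω^2*t) k / ((k.factorial : ℂ) * (k.factorial : ℂ))) *
            (poch (2*α - 1) u / (u.factorial : ℂ) *
              (poch (1-α-t+(k:ℂ)) (n-k-u) * poch (1-α+t) (n-k-u)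
                / (poch ((k:ℂ)+1) (n-k-u) * (((n-k-u).factorial : ℕ) : ℂ)))) := by
    intro k hk
    have hkn : k ≤ n := by have := Finset.mem_range.mp hk; omega
    have hs := saal (n-k) (α+t) (α-t+(k:ℂ)) ((k:ℂ)+1) (poch_nat_ne k)
    rw [show α+t+(α-t+(k:ℂ))-((k:ℂ)+1) = 2*α-1 by ring,
        show ((k:ℂ)+1)-(α+t) = 1-α-t+(k:ℂ) by ring,
        show ((k:ℂ)+1)-(α-t+(k:ℂ)) = 1-α+t by ring] at hs
    rw [← hs, Finset.mul_sum]
    apply Finset.sum_congr (by congr 1; omega)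
    intro u hu
    rfl
  rw [Finset.sum_congr rfl step2]
  rw [triangle_comm n (fun k u =>
      (poch (ω*t) k * poch (ω^2*t) k / ((k.factorial : ℂ) * (k.factorial : ℂ))) *
        (poch (2*α - 1) u / (u.factorial : ℂ) *
          (poch (1-α-t+(k:ℂ)) (n-k-u) * poch (1-α+t) (n-k-u)
            / (poch ((k:ℂ)+1) (n-k-u) * (((n-k-u).factorial : ℕ) : ℂ)))))]
  apply Finset.sum_congr rfl
  intro u hu
  have hun : u ≤ n := by have := Finset.mem_range.mp hu; omega
  rw [Ba_expand (1-α) t (n-u), Finset.mul_sum]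
  apply Finset.sum_congr (by congr 1; omega)
  intro k hk
  have hk' : k ≤ n - u := by have := Finset.mem_range.mp hk; omega
  rw [show n-k-u = n-u-k by omega]
  ring


lemma norm_poch_le (a : ℂ) (M : ℝ) (hM : ‖a‖ ≤ M) (c : ℕ) (m : ℕ) :
    ‖poch (a + c) m‖ ≤ ∏ i ∈ Finset.range m, (M + c + i) := by
  induction m with
  | zero => simp [poch_zero]
  | succ m ih =>
      rw [poch_succ, Finset.prod_range_succ]
      have h1 : ‖poch (a + c) m * (a + c + m)‖ = ‖poch (a + c) m‖ * ‖a + (c:ℂ) + m‖ := norm_mul _ _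
      rw [h1]
      have h2 : ‖a + (c:ℂ) + (m:ℂ)‖ ≤ M + c + m := by
        have := norm_add_le (a + (c:ℂ)) (m:ℂ)
        have h3 := norm_add_le a (c:ℂ)
        simp only [Complex.norm_natCast] at this h3 ⊢
        nlinarith [norm_nonneg a]
      have hnn : (0:ℝ) ≤ M + c + m := le_trans (norm_nonneg _) h2
      refine mul_le_mul ih h2 (norm_nonneg _) (Finset.prod_nonneg (fun i hi => ?_))
      have h0 : (0:ℝ) ≤ M := le_trans (norm_nonneg a) hM
      have h1 : (0:ℝ) ≤ ((c:ℕ):ℝ) := by positivity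
      have h2 : (0:ℝ) ≤ ((i:ℕ):ℝ) := by positivity
      nlinarith


lemma prod_rise_le (M : ℝ) (hM : 0 ≤ M) (m : ℕ) :
    ∏ i ∈ Finset.range m, (M + i)
      ≤ ((⌈M⌉₊ + 1 : ℕ) : ℝ) ^ (⌈M⌉₊) * ((m + 1 : ℕ) : ℝ) ^ (⌈M⌉₊) * (m.factorial : ℝ) := by
  set d := ⌈M⌉₊ with hd
  have step1 : ∏ i ∈ Finset.range m, (M + i) ≤ ∏ i ∈ Finset.range m, ((d : ℝ) + 1 + i) := by
    apply Finset.prod_le_prod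
    · intro i _
      have : (0:ℝ) ≤ (i:ℝ) := Nat.cast_nonneg i
      nlinarith
    · intro i _
      have := Nat.le_ceil M
      nlinarith
  have step2 : ∏ i ∈ Finset.range m, ((d : ℝ) + 1 + i) ≤ (((d + m).factorial : ℕ) : ℝ) := by
    have key : ∀ m : ℕ, (d.factorial : ℝ) * ∏ i ∈ Finset.range m, ((d : ℝ) + 1 + i)
        = (((d + m).factorial : ℕ) : ℝ) := by
      intro m
      induction m with
      | zero => simp
      | succ m ih =>
          rw [Finset.prod_range_succ, ← mul_assoc, ih,
            show d + (m+1) = (d+m)+1 by ring, Nat.factorial_succ]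
          push_cast
          ring
    have h1 : (1:ℝ) ≤ (d.factorial : ℝ) := by exact_mod_cast Nat.one_le_iff_ne_zero.mpr (Nat.factorial_ne_zero d)
    have h2 : 0 ≤ ∏ i ∈ Finset.range m, ((d : ℝ) + 1 + i) :=
      Finset.prod_nonneg (fun i _ => by positivity)
    nlinarith [key m]
  have step3 : ((d + m).factorial : ℕ) ≤ m.factorial * (m + d + 1) ^ d := by
    induction d with
    | zero => simp
    | succ d ihd =>
        have h1 : (d + 1 + m).factorial = (d + m).factorial * (d + m + 1) := by
          rw [show d + 1 + m = (d + m) + 1 by ring, Nat.factorial_succ]; ring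
        rw [show d + 1 = d + 1 from rfl, h1]
        calc (d + m).factorial * (d + m + 1)
            ≤ (m.factorial * (m + d + 1) ^ d) * (d + m + 1) := by
              exact Nat.mul_le_mul_right _ ihd
          _ ≤ (m.factorial * (m + (d+1) + 1) ^ d) * (m + (d+1) + 1) := by
              apply Nat.mul_le_mul
              · exact Nat.mul_le_mul_left _ (Nat.pow_le_pow_left (by omega) d)
              · omega
          _ = m.factorial * (m + (d + 1) + 1) ^ (d + 1) := by ring
  have step4 : (m + d + 1 : ℕ) ≤ (d + 1) * (m + 1) := by nlinarith
  calc ∏ i ∈ Finset.range m, (M + i)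
      ≤ (((d + m).factorial : ℕ) : ℝ) := le_trans step1 step2
    _ ≤ ((m.factorial * (m + d + 1) ^ d : ℕ) : ℝ) := by exact_mod_cast step3
    _ ≤ ((m.factorial * ((d + 1) * (m + 1)) ^ d : ℕ) : ℝ) := by
        exact_mod_cast Nat.mul_le_mul_left _ (Nat.pow_le_pow_left step4 d)
    _ = ((d + 1 : ℕ) : ℝ) ^ d * ((m + 1 : ℕ) : ℝ) ^ d * (m.factorial : ℝ) := by
        push_cast
        rw [mul_pow]
        ring


lemma norm_poch_le' (a : ℂ) (M : ℝ) (hM : ‖a‖ ≤ M) (m : ℕ) :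
    ‖poch a m‖ ≤ ∏ i ∈ Finset.range m, (M + i) := by
  have := norm_poch_le a M hM 0 m
  simpa using this


lemma poch_polybound (a : ℂ) (M : ℝ) (hM : ‖a‖ ≤ M) (m : ℕ) :
    ‖poch a m‖ ≤ ((⌈M⌉₊ + 1 : ℕ) : ℝ) ^ (⌈M⌉₊) * ((m + 1 : ℕ) : ℝ) ^ (⌈M⌉₊) * (m.factorial : ℝ) :=
  le_trans (norm_poch_le' a M hM m) (prod_rise_le M (le_trans (norm_nonneg a) hM) m)


lemma Ba_poly_bound (α t : ℂ) : ∃ (C : ℝ) (D : ℕ), 0 ≤ C ∧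
    ∀ n : ℕ, ‖Ba α t n‖ ≤ C * ((n + 1 : ℕ) : ℝ) ^ D := by
  set M : ℝ := max ‖ω^2*t‖ ‖α - t‖ with hMdef
  set d1 : ℕ := ⌈‖ω*t‖⌉₊ with hd1
  set d2 : ℕ := ⌈M⌉₊ with hd2
  set d3 : ℕ := ⌈‖α+t‖⌉₊ with hd3
  set C1 : ℝ := ((d1 + 1 : ℕ) : ℝ) ^ d1 with hC1
  set C2 : ℝ := ((d2 + 1 : ℕ) : ℝ) ^ d2 with hC2
  set C3 : ℝ := ((d3 + 1 : ℕ) : ℝ) ^ d3 with hC3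
  refine ⟨C1 * C2 * C3, d1 + d2 + d3 + 1, by positivity, ?_⟩
  intro n
  have hfacR : (0:ℝ) < (n.factorial : ℝ) := by positivity
  have key : ∀ k ∈ Finset.range (n+1),
      ‖poch (ω * t) k * poch (ω ^ 2 * t) k * poch (α + t) (n - k) * poch (α - t + k) (n - k)
        / ((Nat.factorial k : ℂ) * (Nat.factorial (n - k) : ℂ))‖
      ≤ (C1 * C2 * C3) * ((n + 1 : ℕ) : ℝ) ^ (d1 + d2 + d3) * (n.factorial : ℝ) := by
    intro k hk
    have hkn : k ≤ n := by have := Finset.mem_range.mp hk; omega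
    have b1 : ‖poch (ω * t) k‖ ≤ C1 * ((n + 1 : ℕ) : ℝ) ^ d1 * (k.factorial : ℝ) := by
      refine le_trans (poch_polybound (ω*t) ‖ω*t‖ le_rfl k) ?_
      rw [hC1]
      have hle : ((k+1:ℕ):ℝ) ≤ ((n+1:ℕ):ℝ) := by exact_mod_cast Nat.succ_le_succ hkn
      have h0 : (0:ℝ) ≤ ((k+1:ℕ):ℝ) := by positivity
      exact mul_le_mul_of_nonneg_right
        (mul_le_mul_of_nonneg_left (pow_le_pow_left₀ h0 hle d1) (by positivity)) (by positivity)
    have b3 : ‖poch (α + t) (n-k)‖ ≤ C3 * ((n + 1 : ℕ) : ℝ) ^ d3 * ((n-k).factorial : ℝ) := by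
      refine le_trans (poch_polybound (α+t) ‖α+t‖ le_rfl (n-k)) ?_
      rw [hC3]
      have hle : ((n-k+1:ℕ):ℝ) ≤ ((n+1:ℕ):ℝ) := by
        have : n - k + 1 ≤ n + 1 := by omega
        exact_mod_cast this
      have h0 : (0:ℝ) ≤ ((n-k+1:ℕ):ℝ) := by positivity
      exact mul_le_mul_of_nonneg_right
        (mul_le_mul_of_nonneg_left (pow_le_pow_left₀ h0 hle d3) (by positivity)) (by positivity)
    have b24 : ‖poch (ω ^ 2 * t) k‖ * ‖poch (α - t + k) (n - k)‖
        ≤ C2 * ((n + 1 : ℕ) : ℝ) ^ d2 * (n.factorial : ℝ) := by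
      have h2 : ‖poch (ω ^ 2 * t) k‖ ≤ ∏ i ∈ Finset.range k, (M + i) :=
        norm_poch_le' _ M (le_max_left _ _) k
      have h4 : ‖poch (α - t + k) (n - k)‖ ≤ ∏ i ∈ Finset.range (n-k), (M + k + i) :=
        norm_poch_le (α - t) M (le_max_right _ _) k (n-k)
      have hM0 : (0:ℝ) ≤ M := le_trans (norm_nonneg _) (le_max_left _ _)
      have hsplice : (∏ i ∈ Finset.range k, (M + i)) * ∏ i ∈ Finset.range (n-k), (M + k + i)
          = ∏ i ∈ Finset.range n, (M + i) := by
        have := Finset.prod_range_add (fun i => M + (i:ℝ)) k (n-k)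
        rw [show k + (n-k) = n by omega] at this
        rw [this]
        congr 1
        apply Finset.prod_congr rfl
        intro i _
        push_cast
        ring
      calc ‖poch (ω ^ 2 * t) k‖ * ‖poch (α - t + k) (n - k)‖
          ≤ (∏ i ∈ Finset.range k, (M + i)) * ∏ i ∈ Finset.range (n-k), (M + k + i) := by
            refine mul_le_mul h2 h4 (norm_nonneg _) (Finset.prod_nonneg fun i _ => by positivity)
        _ = ∏ i ∈ Finset.range n, (M + i) := hsplice
        _ ≤ C2 * ((n + 1 : ℕ) : ℝ) ^ d2 * (n.factorial : ℝ) := by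
            have := prod_rise_le M hM0 n
            rw [hC2]
            calc ∏ i ∈ Finset.range n, (M + i)
                ≤ ((d2 + 1 : ℕ) : ℝ) ^ d2 * ((n + 1 : ℕ) : ℝ) ^ d2 * (n.factorial : ℝ) := this
              _ = _ := by ring
    rw [norm_div, norm_mul, norm_mul, norm_mul, norm_mul]
    have hden : ‖((k.factorial : ℂ))‖ * ‖(((n-k).factorial : ℕ) : ℂ)‖
        = (k.factorial : ℝ) * ((n-k).factorial : ℝ) := by
      simp [Complex.norm_natCast]
    rw [hden]
    have hdenpos : (0:ℝ) < (k.factorial : ℝ) * ((n-k).factorial : ℝ) := by positivity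
    rw [div_le_iff₀ hdenpos]
    calc ‖poch (ω * t) k‖ * ‖poch (ω ^ 2 * t) k‖ * ‖poch (α + t) (n - k)‖ * ‖poch (α - t + k) (n - k)‖
        = ‖poch (ω * t) k‖ * ‖poch (α + t) (n - k)‖ *
            (‖poch (ω ^ 2 * t) k‖ * ‖poch (α - t + k) (n - k)‖) := by ring
      _ ≤ (C1 * ((n + 1 : ℕ) : ℝ) ^ d1 * (k.factorial : ℝ)) *
            (C3 * ((n + 1 : ℕ) : ℝ) ^ d3 * ((n-k).factorial : ℝ)) *
            (C2 * ((n + 1 : ℕ) : ℝ) ^ d2 * (n.factorial : ℝ)) := by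
          refine mul_le_mul (mul_le_mul b1 b3 (norm_nonneg _) (by positivity))
            b24 (by positivity) (by positivity)
      _ = (C1 * C2 * C3) * ((n + 1 : ℕ) : ℝ) ^ (d1 + d2 + d3) * (n.factorial : ℝ) *
            ((k.factorial : ℝ) * ((n-k).factorial : ℝ)) := by
          rw [pow_add, pow_add]
          ring
  calc ‖Ba α t n‖
      ≤ (1/(n.factorial:ℝ)) * ∑ k ∈ Finset.range (n+1),
          ‖poch (ω * t) k * poch (ω ^ 2 * t) k * poch (α + t) (n - k) * poch (α - t + k) (n - k)
            / ((Nat.factorial k : ℂ) * (Nat.factorial (n - k) : ℂ))‖ := by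
        rw [Ba, norm_mul]
        have h1 : ‖(1/(n.factorial:ℂ))‖ = 1/(n.factorial:ℝ) := by simp
        rw [h1]
        exact mul_le_mul_of_nonneg_left (norm_sum_le _ _) (by positivity)
    _ ≤ (1/(n.factorial:ℝ)) * ∑ k ∈ Finset.range (n+1),
          ((C1 * C2 * C3) * ((n + 1 : ℕ) : ℝ) ^ (d1 + d2 + d3) * (n.factorial : ℝ)) := by
        gcongr with k hk
        exact key k hk
    _ = C1 * C2 * C3 * ((n + 1 : ℕ) : ℝ) ^ (d1 + d2 + d3 + 1) := by
        rw [Finset.sum_const, Finset.card_range, pow_add]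
        field_simp
        push_cast; ring


lemma summable_poly_geo (C : ℝ) (D : ℕ) {r : ℝ} (h0 : 0 ≤ r) (hr : r < 1) :
    Summable (fun n : ℕ => C * ((n + 1 : ℕ) : ℝ) ^ D * r ^ n) := by
  rcases eq_or_lt_of_le h0 with h | h
  · apply summable_of_ne_finset_zero (s := {0})
    intro n hn
    have hn0 : n ≠ 0 := by simpa using hn
    rw [← h, zero_pow hn0, mul_zero]
  · have hs := summable_pow_mul_geometric_of_norm_lt_one (R := ℝ) D
      (r := r) (by rwa [Real.norm_eq_abs, abs_of_nonneg h0])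
    have hshift : Summable (fun n : ℕ => ((n + 1 : ℕ) : ℝ) ^ D * r ^ (n + 1)) :=
      (summable_nat_add_iff 1).mpr hs
    refine ((hshift.mul_left (C / r)).congr ?_)
    intro n
    have hr0 : r ≠ 0 := ne_of_gt h
    rw [pow_succ, show C / r * (((n + 1 : ℕ) : ℝ) ^ D * (r ^ n * r))
      = C * ((n + 1 : ℕ) : ℝ) ^ D * r ^ n * (r⁻¹ * r) from by ring, inv_mul_cancel₀ hr0, mul_one]


lemma coef_bound (s : ℂ) (i : ℕ) :
    ‖poch s i / (i.factorial : ℂ)‖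
      ≤ ((⌈‖s‖⌉₊ + 1 : ℕ) : ℝ) ^ (⌈‖s‖⌉₊) * ((i + 1 : ℕ) : ℝ) ^ (⌈‖s‖⌉₊) := by
  rw [norm_div, Complex.norm_natCast]
  rw [div_le_iff₀ (by positivity)]
  exact poch_polybound s ‖s‖ le_rfl i


lemma summable_of_polybound (f : ℕ → ℂ) (C : ℝ) (D : ℕ)
    (hb : ∀ n, ‖f n‖ ≤ C * ((n + 1 : ℕ) : ℝ) ^ D) {z : ℂ} (hz : ‖z‖ < 1) :
    Summable (fun n => ‖f n * z ^ n‖) := by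
  refine Summable.of_nonneg_of_le (fun n => norm_nonneg _) (fun n => ?_)
    (summable_poly_geo C D (norm_nonneg z) hz)
  rw [norm_mul, norm_pow]
  exact mul_le_mul_of_nonneg_right (hb n) (by positivity)


lemma pow_pred_le (r : ℝ) (hr : 1/2 ≤ r) (hr1 : r ≤ 1) (n : ℕ) : r ^ (n - 1) ≤ 2 * r ^ n := by
  rcases n with _ | m
  · simp
  · rw [Nat.add_sub_cancel, pow_succ]
    have h0 : (0:ℝ) ≤ r ^ m := pow_nonneg (by linarith) m
    nlinarith


lemma deriv_term_bound (s : ℂ) (r : ℝ) (hr : 1/2 ≤ r) (hr1 : r ≤ 1) (y : ℂ) (hy : ‖y‖ ≤ r)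
    (n : ℕ) :
    ‖poch s n / (n.factorial : ℂ) * ((n : ℂ) * y ^ (n - 1))‖
      ≤ 2 * (((⌈‖s‖⌉₊ + 1 : ℕ) : ℝ) ^ (⌈‖s‖⌉₊)) * ((n + 1 : ℕ) : ℝ) ^ (⌈‖s‖⌉₊ + 1) * r ^ n := by
  set d := ⌈‖s‖⌉₊ with hd
  set C : ℝ := ((d + 1 : ℕ) : ℝ) ^ d with hC
  have h0r : (0:ℝ) ≤ r := by linarith
  rw [norm_mul, norm_mul, norm_pow, Complex.norm_natCast]
  have h1 : ‖poch s n / (n.factorial : ℂ)‖ ≤ C * ((n + 1 : ℕ) : ℝ) ^ d := coef_bound s n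
  have h2 : ‖y‖ ^ (n-1) ≤ r ^ (n-1) := pow_le_pow_left₀ (norm_nonneg y) hy (n-1)
  have h3 : r ^ (n-1) ≤ 2 * r ^ n := pow_pred_le r hr hr1 n
  have h4 : (n : ℝ) ≤ ((n + 1 : ℕ) : ℝ) := by push_cast; linarith
  calc ‖poch s n / (n.factorial : ℂ)‖ * ((n:ℝ) * ‖y‖ ^ (n-1))
      ≤ (C * ((n + 1 : ℕ) : ℝ) ^ d) * (((n + 1 : ℕ) : ℝ) * (2 * r ^ n)) := by
        refine mul_le_mul h1 ?_ (by positivity) (by positivity)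
        refine mul_le_mul h4 (le_trans h2 h3) (by positivity) (by positivity)
    _ = 2 * C * ((n + 1 : ℕ) : ℝ) ^ (d + 1) * r ^ n := by rw [pow_succ]; ring


lemma coef_rec (s : ℂ) (n : ℕ) :
    poch s (n+1) / (((n+1).factorial : ℕ) : ℂ) * (((n+1 : ℕ)) : ℂ)
      = (s + n) * (poch s n / ((n.factorial : ℕ) : ℂ)) := by
  rw [poch_succ, Nat.factorial_succ]
  have h1 : ((n:ℂ) + 1) ≠ 0 := by
    have := Nat.cast_add_one_ne_zero (R := ℂ) n
    simpa using this
  push_cast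
  rw [div_mul_eq_mul_div, mul_div_assoc']
  rw [div_eq_div_iff (mul_ne_zero h1 (fact_ne n)) (fact_ne n)]
  ring


lemma summable_deriv_series (s : ℂ) {y : ℂ} (r : ℝ) (hr : 1/2 ≤ r) (hr1 : r < 1)
    (hy : ‖y‖ ≤ r) :
    Summable (fun n => poch s n / (n.factorial : ℂ) * ((n : ℂ) * y ^ (n - 1))) := by
  apply Summable.of_norm
  refine Summable.of_nonneg_of_le (fun n => norm_nonneg _)
    (fun n => deriv_term_bound s r hr (le_of_lt hr1) y hy n)
    (summable_poly_geo (2 * (((⌈‖s‖⌉₊ + 1 : ℕ) : ℝ) ^ (⌈‖s‖⌉₊))) (⌈‖s‖⌉₊ + 1) (by linarith) hr1)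


lemma hasDerivAt_F (s : ℂ) {w : ℂ} (hw : ‖w‖ < 1) :
    HasDerivAt (fun y => ∑' i : ℕ, poch s i / (i.factorial : ℂ) * y ^ i)
      (∑' i : ℕ, poch s i / (i.factorial : ℂ) * ((i : ℂ) * w ^ (i - 1))) w := by
  set r := (1 + ‖w‖)/2 with hrdef
  have hr1 : r < 1 := by rw [hrdef]; linarith
  have hrhalf : 1/2 ≤ r := by rw [hrdef]; have := norm_nonneg w; linarith
  have hr0 : 0 < r := by linarith
  have hwr : w ∈ Metric.ball (0:ℂ) r := by
    simp only [Metric.mem_ball, dist_zero_right]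
    rw [hrdef]; linarith
  refine hasDerivAt_tsum_of_isPreconnected
    (u := fun n => 2 * (((⌈‖s‖⌉₊ + 1 : ℕ) : ℝ) ^ (⌈‖s‖⌉₊)) * ((n + 1 : ℕ) : ℝ) ^ (⌈‖s‖⌉₊ + 1) * r ^ n)
    ?_ Metric.isOpen_ball (convex_ball (0:ℂ) r).isPreconnected
    (g' := fun n y => poch s n / (n.factorial : ℂ) * ((n : ℂ) * y ^ (n - 1)))
    ?_ ?_ (Metric.mem_ball_self hr0) ?_ hwr
  · exact summable_poly_geo _ _ (by positivity) hr1
  · intro n y _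
    exact (hasDerivAt_pow n y).const_mul (poch s n / (n.factorial : ℂ))
  · intro n y hy
    have hy' : ‖y‖ ≤ r := le_of_lt (by simpa [Metric.mem_ball, dist_zero_right] using hy)
    exact deriv_term_bound s r hrhalf (le_of_lt hr1) y hy' n
  · apply summable_of_ne_finset_zero (s := {0})
    intro n hn
    have hn0 : n ≠ 0 := by simpa using hn
    simp [zero_pow hn0]


lemma ode_F (s : ℂ) {w : ℂ} (hw : ‖w‖ < 1) :
    (1 - w) * (∑' i : ℕ, poch s i / (i.factorial : ℂ) * ((i : ℂ) * w ^ (i - 1)))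
      = s * ∑' i : ℕ, poch s i / (i.factorial : ℂ) * w ^ i := by
  set d := ⌈‖s‖⌉₊ with hd
  set C : ℝ := ((d + 1 : ℕ) : ℝ) ^ d with hC
  have S1 : Summable (fun i : ℕ => poch s i / (i.factorial : ℂ) * w ^ i) :=
    Summable.of_norm (summable_of_polybound _ C d (coef_bound s) hw)
  have S2 : Summable (fun i : ℕ => (i : ℂ) * (poch s i / (i.factorial : ℂ) * w ^ i)) := by
    have hb : ∀ i : ℕ, ‖(i : ℂ) * (poch s i / (i.factorial : ℂ))‖ ≤ C * ((i + 1 : ℕ) : ℝ) ^ (d+1) := by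
      intro i
      rw [norm_mul, Complex.norm_natCast]
      have h1 := coef_bound s i
      have h4 : (i : ℝ) ≤ ((i + 1 : ℕ) : ℝ) := by push_cast; linarith
      calc (i:ℝ) * ‖poch s i / (i.factorial : ℂ)‖
          ≤ ((i + 1 : ℕ) : ℝ) * (C * ((i + 1 : ℕ) : ℝ) ^ d) := by
            refine mul_le_mul h4 h1 (norm_nonneg _) (by positivity)
        _ = C * ((i + 1 : ℕ) : ℝ) ^ (d+1) := by rw [pow_succ]; ring
    have := Summable.of_norm (summable_of_polybound
      (fun i : ℕ => (i : ℂ) * (poch s i / (i.factorial : ℂ))) C (d+1) hb hw)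
    refine this.congr (fun i => by ring)
  have S4 : Summable (fun i : ℕ => poch s i / (i.factorial : ℂ) * ((i : ℂ) * w ^ (i - 1))) := by
    refine summable_deriv_series s ((1 + ‖w‖)/2) (by have := norm_nonneg w; linarith)
      (by linarith) (by linarith)
  -- A : shift the derivative series
  have A : ∑' i : ℕ, poch s i / (i.factorial : ℂ) * ((i : ℂ) * w ^ (i - 1))
      = ∑' n : ℕ, (s + n) * (poch s n / (n.factorial : ℂ) * w ^ n) := by
    rw [Summable.tsum_eq_zero_add S4]
    simp only [Nat.cast_zero, zero_mul, mul_zero, zero_add, Nat.add_sub_cancel]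
    apply tsum_congr
    intro n
    rw [show poch s (n+1) / ((n+1).factorial : ℂ) * ((((n+1):ℕ) : ℂ) * w ^ n)
        = (poch s (n+1) / (((n+1).factorial : ℕ) : ℂ) * (((n+1 : ℕ)) : ℂ)) * w ^ n from by ring,
      coef_rec s n]
    ring
  -- C : z * F' = T
  have Cc : w * (∑' i : ℕ, poch s i / (i.factorial : ℂ) * ((i : ℂ) * w ^ (i - 1)))
      = ∑' i : ℕ, (i : ℂ) * (poch s i / (i.factorial : ℂ) * w ^ i) := by
    rw [← tsum_mul_left]
    apply tsum_congr
    intro i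
    rcases i with _ | m
    · simp
    · rw [Nat.add_sub_cancel, pow_succ]
      push_cast
      ring
  -- B : split
  have B : ∑' n : ℕ, (s + n) * (poch s n / (n.factorial : ℂ) * w ^ n)
      = s * (∑' i : ℕ, poch s i / (i.factorial : ℂ) * w ^ i)
        + ∑' i : ℕ, (i : ℂ) * (poch s i / (i.factorial : ℂ) * w ^ i) := by
    rw [← tsum_mul_left, ← Summable.tsum_add (S1.mul_left s) S2]
    apply tsum_congr
    intro n
    ring
  calc (1 - w) * (∑' i : ℕ, poch s i / (i.factorial : ℂ) * ((i : ℂ) * w ^ (i - 1)))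
      = (∑' i : ℕ, poch s i / (i.factorial : ℂ) * ((i : ℂ) * w ^ (i - 1)))
        - w * (∑' i : ℕ, poch s i / (i.factorial : ℂ) * ((i : ℂ) * w ^ (i - 1))) := by ring
    _ = (s * (∑' i : ℕ, poch s i / (i.factorial : ℂ) * w ^ i)
          + ∑' i : ℕ, (i : ℂ) * (poch s i / (i.factorial : ℂ) * w ^ i))
        - ∑' i : ℕ, (i : ℂ) * (poch s i / (i.factorial : ℂ) * w ^ i) := by rw [Cc, A, B]
    _ = s * ∑' i : ℕ, poch s i / (i.factorial : ℂ) * w ^ i := by ring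


lemma one_sub_cpow (s : ℂ) {z : ℂ} (hz : ‖z‖ < 1) :
    (1 - z) ^ (-s) = ∑' i : ℕ, poch s i / (i.factorial : ℂ) * z ^ i := by
  have hne : ∀ w : ℂ, ‖w‖ < 1 → (1 - w) ≠ 0 := by
    intro w hw h
    rw [sub_eq_zero] at h
    rw [← h] at hw
    simp at hw
  have hG : ∀ w ∈ Metric.ball (0:ℂ) 1,
      HasDerivAt (fun y => (1 - y) ^ s * ∑' i : ℕ, poch s i / (i.factorial : ℂ) * y ^ i) 0 w := by
    intro w hw
    have hw1 : ‖w‖ < 1 := by simpa [Metric.mem_ball, dist_zero_right] using hw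
    have hslit : (1 - w) ∈ Complex.slitPlane := by
      apply Or.inl
      have h1 : w.re ≤ ‖w‖ := Complex.re_le_norm w
      simp only [Complex.sub_re, Complex.one_re]
      linarith
    have h1 : HasDerivAt (fun y : ℂ => 1 - y) (-1) w := by
      simpa using (hasDerivAt_id w).const_sub 1
    have h2 : HasDerivAt (fun y : ℂ => (1 - y) ^ s) (s * (1 - w) ^ (s - 1) * (-1)) w :=
      HasDerivAt.cpow_const h1 hslit
    have h3 := hasDerivAt_F s hw1
    have h4 := h2.mul h3
    convert h4 using 1
    case e'_4 => rfl
    case e'_5 => rfl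
    case e'_8 => rfl
    have hsplit : (1 - w) ^ s = (1 - w) ^ (s - 1) * (1 - w) := by
      rw [show s = (s - 1) + 1 from by ring, Complex.cpow_add _ _ (hne w hw1), Complex.cpow_one]
      ring_nf
    rw [hsplit]
    linear_combination (-((1 - w) ^ (s-1))) * (ode_F s hw1)
  have hconst : ∀ w ∈ Metric.ball (0:ℂ) 1,
      (1 - w) ^ s * ∑' i : ℕ, poch s i / (i.factorial : ℂ) * w ^ i = 1 := by
    intro w hw
    have h0mem : (0:ℂ) ∈ Metric.ball (0:ℂ) 1 := by simp
    have hdiff : DifferentiableOn ℂ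
        (fun y => (1 - y) ^ s * ∑' i : ℕ, poch s i / (i.factorial : ℂ) * y ^ i)
        (Metric.ball (0:ℂ) 1) :=
      fun y hy => ((hG y hy).differentiableAt).differentiableWithinAt
    have hzero : ∀ y ∈ Metric.ball (0:ℂ) 1, fderivWithin ℂ
        (fun y => (1 - y) ^ s * ∑' i : ℕ, poch s i / (i.factorial : ℂ) * y ^ i)
        (Metric.ball (0:ℂ) 1) y = 0 := by
      intro y hy
      have hu : UniqueDiffWithinAt ℂ (Metric.ball (0:ℂ) 1) y :=
        Metric.isOpen_ball.uniqueDiffOn y hy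
      have := ((hG y hy).hasFDerivAt.hasFDerivWithinAt).fderivWithin hu
      rw [this]
      ext v
      simp
    have hGconst := (convex_ball (0:ℂ) 1).is_const_of_fderivWithin_eq_zero hdiff hzero hw h0mem
    rw [hGconst]
    have hF0 : ∑' i : ℕ, poch s i / (i.factorial : ℂ) * (0:ℂ) ^ i = 1 := by
      rw [tsum_eq_single 0 (fun n hn => by simp [zero_pow hn])]
      simp [poch_zero]
    rw [sub_zero, Complex.one_cpow, hF0, one_mul]
  have key := hconst z (by simpa [Metric.mem_ball, dist_zero_right] using hz)
  rw [Complex.cpow_neg]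
  exact inv_eq_of_mul_eq_one_right key


theorem Ba_genFun_Euler (α t z : ℂ) (hz : ‖z‖ < 1) :
    ∑' n : ℕ, Ba α t n * z ^ n
      = (1 - z) ^ (1 - 2 * α) * ∑' n : ℕ, Ba (1 - α) t n * z ^ n := by
  obtain ⟨C1, D1, hC1nonneg, hB1⟩ := Ba_poly_bound (1 - α) t
  have hf : Summable (fun i : ℕ => ‖poch (2 * α - 1) i / (i.factorial : ℂ) * z ^ i‖) :=
    summable_of_polybound _ _ _ (coef_bound (2 * α - 1)) hz
  have hg : Summable (fun n : ℕ => ‖Ba (1 - α) t n * z ^ n‖) :=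
    summable_of_polybound (fun n => Ba (1 - α) t n) C1 D1 hB1 hz
  have hexp : (1 - z) ^ (1 - 2 * α)
      = ∑' i : ℕ, poch (2 * α - 1) i / (i.factorial : ℂ) * z ^ i := by
    rw [show (1 : ℂ) - 2 * α = -(2 * α - 1) from by ring]
    exact one_sub_cpow (2 * α - 1) hz
  rw [hexp, tsum_mul_tsum_eq_tsum_sum_antidiagonal_of_summable_norm hf hg]
  apply tsum_congr
  intro n
  rw [Finset.Nat.sum_antidiagonal_eq_sum_range_succ_mk]
  rw [Ba_conv α t n, Finset.sum_mul]
  apply Finset.sum_congr rfl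
  intro i hi
  have hin : i ≤ n := by have := Finset.mem_range.mp hi; omega
  rw [show z ^ n = z ^ i * z ^ (n - i) from by rw [← pow_add]; congr 1; omega]
  ring
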